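/- Let H be a Hopf ℂ-algebra with comultiplication Δ, counit ε and antipode S, and let ρ be a Fox pairing on H. Then for all x,y ∈ H: ρ(S(x), y) = −S(x_[1])·ρ(x_[2], y) and ρ(x, S(y)) = −ρ(x, y_[1])·S(y_[2]) (Sweedler notation). -/

import Mathlib

open TensorProduct

noncomputable section

namespace Stmt13

variable {H : Type*} [Ring H] [HopfAlgebra ℂ H]

/-- The antipode of `H`. -/
def S : H →ₗ[ℂ] H := HopfAlgebra.antipode ℂ

/-- The comultiplication of `H`. -/
def Δ : H →ₗ[ℂ] H ⊗[ℂ] H := Coalgebra.comul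

/-- The counit of `H`. -/
def ε : H →ₗ[ℂ] ℂ := Coalgebra.counit

/-- The multiplication of `H` as a linear map on the tensor square. -/
def mulH : H ⊗[ℂ] H →ₗ[ℂ] H := LinearMap.mul' ℂ H

/-- The flip `(c ⊗ d)^∘ = d ⊗ c` on `H ⊗[ℂ] H`. -/
def flipT : H ⊗[ℂ] H →ₗ[ℂ] H ⊗[ℂ] H := (TensorProduct.comm ℂ H H).toLinearMap

/-- `H` is cocommutative. -/
def IsCocomm (H : Type*) [Ring H] [HopfAlgebra ℂ H] : Prop :=
  ∀ a : H, (TensorProduct.comm ℂ H H) (Coalgebra.comul (R := ℂ) a) = Coalgebra.comul (R := ℂ) a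

/-- `H` is involutive: the antipode squares to the identity. -/
def IsInvolutive (H : Type*) [Ring H] [HopfAlgebra ℂ H] : Prop :=
  ∀ a : H, S (S a) = a

/-- `ρ` is a Fox pairing: a left Fox derivative in its first argument and a
right Fox derivative in its second argument. -/
def IsFoxPairing (ρ : H →ₗ[ℂ] H →ₗ[ℂ] H) : Prop :=
  (∀ a b c : H, ρ (a * b) c = ε b • ρ a c + a * ρ b c) ∧
  (∀ a b c : H, ρ c (a * b) = ρ c a * b + ε a • ρ c b)

/-- `ρ` is antisymmetric: its transpose `ρ̄(a,b) = S(ρ(S b, S a))` equals `−ρ`. -/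
def IsAntisymmetric (ρ : H →ₗ[ℂ] H →ₗ[ℂ] H) : Prop :=
  ∀ a b : H, S (ρ (S b) (S a)) = - ρ a b

/-- `(x ⊗ y) ⊗ z ↦ y * S(z) * x`. -/
def firstFac : (H ⊗[ℂ] H) ⊗[ℂ] H →ₗ[ℂ] H :=
  (mulH ∘ₗ (TensorProduct.map mulH LinearMap.id) ∘ₗ
    ((TensorProduct.assoc ℂ H H H).trans (TensorProduct.comm ℂ H (H ⊗[ℂ] H))).toLinearMap)
  ∘ₗ TensorProduct.map (LinearMap.id : H ⊗[ℂ] H →ₗ[ℂ] H ⊗[ℂ] H) S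

/-- `ρ` as a linear map on the tensor square. -/
def ρT (ρ : H →ₗ[ℂ] H →ₗ[ℂ] H) : H ⊗[ℂ] H →ₗ[ℂ] H := TensorProduct.lift ρ

/-- The Massuyeau–Turaev double bracket associated with a Fox pairing, as a linear map:
`a ⊗ b ↦ b₍₁₎ S(ρ(a₍₂₎,b₍₂₎)₍₁₎) a₍₁₎ ⊗ ρ(a₍₂₎,b₍₂₎)₍₂₎`. -/
def dbrMap (ρ : H →ₗ[ℂ] H →ₗ[ℂ] H) : H ⊗[ℂ] H →ₗ[ℂ] H ⊗[ℂ] H :=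
  (TensorProduct.map firstFac LinearMap.id)
  ∘ₗ (TensorProduct.assoc ℂ (H ⊗[ℂ] H) H H).symm.toLinearMap
  ∘ₗ (TensorProduct.map LinearMap.id (Δ ∘ₗ ρT ρ))
  ∘ₗ (TensorProduct.tensorTensorTensorComm ℂ H H H H).toLinearMap
  ∘ₗ (TensorProduct.map Δ Δ)

/-- For a Fox pairing `ρ` on a Hopf algebra:
`ρ(S x, y) = −S(x₍₁₎) ρ(x₍₂₎, y)` and `ρ(x, S y) = −ρ(x, y₍₁₎) S(y₍₂₎)`. -/
theorem fox_pairing_antipode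
    (ρ : H →ₗ[ℂ] H →ₗ[ℂ] H) (hρ : IsFoxPairing ρ) (x y : H) :
    ρ (S x) y = - mulH (TensorProduct.map S (ρ.flip y) (Δ x)) ∧
    ρ x (S y) = - mulH (TensorProduct.map (ρ x) S (Δ y)) := by
  obtain ⟨h1, h2⟩ := hρ
  have hε1 : ε (1 : H) = (1 : ℂ) := by simp [ε]
  have hρ1 : ∀ c : H, ρ 1 c = 0 := by
    intro c
    have h := h1 1 1 c
    rw [one_mul, hε1, one_smul, one_mul] at h
    exact right_eq_add.mp h
  have hρ1' : ∀ c : H, ρ c 1 = 0 := by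
    intro c
    have h := h2 1 1 c
    rw [one_mul, hε1, one_smul, mul_one] at h
    exact right_eq_add.mp h
  constructor
  · set f := ρ.flip y with hf
    have hfa : ∀ a : H, f a = ρ a y := fun a => rfl
    set r := Coalgebra.Repr.arbitrary ℂ x with hr
    have hΔ : Δ x = ∑ i ∈ r.index, r.left i ⊗ₜ[ℂ] r.right i := r.eq.symm
    have hRHS : mulH (TensorProduct.map S f (Δ x))
        = ∑ i ∈ r.index, S (r.left i) * f (r.right i) := by
      rw [hΔ, map_sum, map_sum]
      simp [mulH]
    have hx : ∑ i ∈ r.index, ε (r.right i) • r.left i = x := by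
      have h0 := Coalgebra.sum_tmul_counit_eq (R := ℂ) r
      have h1' := congrArg (TensorProduct.rid ℂ H) h0
      rw [map_sum] at h1'
      simpa [ε] using h1'
    have e2 : ∑ i ∈ r.index, f (S (r.left i) * r.right i) = 0 := by
      rw [← map_sum]
      have hs : ∑ i ∈ r.index, S (r.left i) * r.right i = ε x • (1 : H) :=
        HopfAlgebra.sum_antipode_mul_eq_smul r
      rw [hs, map_smul, hfa, hρ1 y, smul_zero]
    have e1 : ∑ i ∈ r.index, f (S (r.left i) * r.right i)
        = ∑ i ∈ r.index, (ε (r.right i) • f (S (r.left i)) + S (r.left i) * f (r.right i)) :=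
      Finset.sum_congr rfl fun i _ => by rw [hfa, hfa, hfa]; exact h1 _ _ _
    have e3 : ∑ i ∈ r.index, ε (r.right i) • f (S (r.left i)) = f (S x) := by
      have h5 : ∑ i ∈ r.index, ε (r.right i) • S (r.left i) = S x := by
        have h6 := congrArg S hx
        rw [map_sum] at h6
        simpa only [map_smul] using h6
      calc ∑ i ∈ r.index, ε (r.right i) • f (S (r.left i))
          = f (∑ i ∈ r.index, ε (r.right i) • S (r.left i)) := by
            rw [map_sum]
            exact Finset.sum_congr rfl fun i _ => (map_smul f _ _).symm
        _ = f (S x) := by rw [h5]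
    have e4 : f (S x) + ∑ i ∈ r.index, S (r.left i) * f (r.right i) = 0 := by
      rw [← e3, ← Finset.sum_add_distrib, ← e1, e2]
    rw [hRHS, ← hfa]
    exact eq_neg_of_add_eq_zero_left e4
  · set g := ρ x with hg
    set r := Coalgebra.Repr.arbitrary ℂ y with hr
    have hΔ : Δ y = ∑ i ∈ r.index, r.left i ⊗ₜ[ℂ] r.right i := r.eq.symm
    have hRHS : mulH (TensorProduct.map g S (Δ y))
        = ∑ i ∈ r.index, g (r.left i) * S (r.right i) := by
      rw [hΔ, map_sum, map_sum]
      simp [mulH]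
    have hy : ∑ i ∈ r.index, ε (r.left i) • r.right i = y := by
      have h0 := Coalgebra.sum_counit_tmul_eq (R := ℂ) r
      have h1' := congrArg (TensorProduct.lid ℂ H) h0
      rw [map_sum] at h1'
      simpa [ε] using h1'
    have e2 : ∑ i ∈ r.index, g (r.left i * S (r.right i)) = 0 := by
      rw [← map_sum]
      have hs : ∑ i ∈ r.index, r.left i * S (r.right i) = ε y • (1 : H) :=
        HopfAlgebra.sum_mul_antipode_eq_smul r
      rw [hs, map_smul, hρ1' x, smul_zero]
    have e1 : ∑ i ∈ r.index, g (r.left i * S (r.right i))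
        = ∑ i ∈ r.index, (g (r.left i) * S (r.right i) + ε (r.left i) • g (S (r.right i))) :=
      Finset.sum_congr rfl fun i _ => h2 _ _ _
    have e3 : ∑ i ∈ r.index, ε (r.left i) • g (S (r.right i)) = g (S y) := by
      have h5 : ∑ i ∈ r.index, ε (r.left i) • S (r.right i) = S y := by
        have h6 := congrArg S hy
        rw [map_sum] at h6
        simpa only [map_smul] using h6
      calc ∑ i ∈ r.index, ε (r.left i) • g (S (r.right i))
          = g (∑ i ∈ r.index, ε (r.left i) • S (r.right i)) := by
            rw [map_sum]
            exact Finset.sum_congr rfl fun i _ => (map_smul g _ _).symm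
        _ = g (S y) := by rw [h5]
    have e4 : (∑ i ∈ r.index, g (r.left i) * S (r.right i)) + g (S y) = 0 := by
      rw [← e3, ← Finset.sum_add_distrib, ← e1, e2]
    rw [hRHS]
    exact eq_neg_of_add_eq_zero_right e4

end Stmt13
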